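/- Let k ≥ 1 be an integer, λ > 0, β ∈ (0,1], and t ≥ 0. Then the derivative at u = 1 of the probability generating function of the time-fractional Poisson process of order k satisfies (d/du) M_β(−kλt^β(1 − (1/k)∑_{j=1}^k u^j)) |_{u=1} = (k(k+1)/2) · λ t^β / Γ(1+β); that is, the mean of the time-fractional Poisson process of order k is E[N_β^k(t)] = (k(k+1)/2) λ t^β / Γ(1+β). -/

import Mathlib

open scoped BigOperators

/-- The Mittag-Leffler function `M_β(z) = ∑_{m=0}^∞ z^m / Γ(βm + 1)`. -/
noncomputable def mittagLeffler (β z : ℝ) : ℝ :=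
  ∑' m : ℕ, z ^ m / Real.Gamma (β * m + 1)

/-- Shifted Mittag-Leffler auxiliary series. -/
noncomputable def mlAux (β z : ℝ) : ℝ :=
  ∑' m : ℕ, z ^ m / Real.Gamma (β * (m + 1) + 1)

lemma gamma_lower {x : ℝ} (hx : 3 ≤ x) : (2:ℝ) ^ (x - 4) ≤ Real.Gamma x := by
  set n : ℕ := ⌊x⌋₊ - 2 with hn
  have hfl3 : 3 ≤ ⌊x⌋₊ := Nat.le_floor (by exact_mod_cast hx)
  have hn2 : (n : ℝ) + 2 = (⌊x⌋₊ : ℝ) := by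
    have : n + 2 = ⌊x⌋₊ := by omega
    exact_mod_cast this
  have hle : (n : ℝ) + 2 ≤ x := by
    rw [hn2]; exact Nat.floor_le (by linarith)
  have hmono : Real.Gamma ((n : ℝ) + 2) ≤ Real.Gamma x := by
    rcases eq_or_lt_of_le hle with h | h
    · rw [h]
    · exact (Real.Gamma_strictMonoOn_Ici (by simp : ((n:ℝ)+2) ∈ Set.Ici 2)
        (le_trans (by norm_num) hx) h).le
  have hfact : ((n+1).factorial : ℝ) = Real.Gamma ((n : ℝ) + 2) := by
    rw [show ((n:ℝ) + 2) = ((n+1 : ℕ) : ℝ) + 1 by push_cast; ring,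
      Real.Gamma_nat_eq_factorial]
  have h2pow : (2:ℝ) ^ n ≤ ((n+1).factorial : ℝ) := by
    have := @Nat.factorial_mul_pow_le_factorial 1 n
    simp only [Nat.factorial_one, one_mul] at this
    calc (2:ℝ) ^ n = ((2^n : ℕ) : ℝ) := by push_cast; ring
    _ ≤ _ := by exact_mod_cast by simpa [Nat.add_comm] using this
  have hx4 : x - 4 ≤ (n : ℝ) := by
    have := Nat.lt_floor_add_one x
    rw [← hn2] at this; linarith
  calc (2:ℝ) ^ (x - 4) ≤ (2:ℝ) ^ ((n:ℝ)) := by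
        apply Real.rpow_le_rpow_of_exponent_le (by norm_num) hx4
    _ = (2:ℝ) ^ n := by rw [Real.rpow_natCast]
    _ ≤ ((n+1).factorial : ℝ) := h2pow
    _ ≤ Real.Gamma x := by rw [hfact] at *; exact hmono

lemma summable_inv_gamma {β : ℝ} (hβ : 0 < β) {c : ℝ} (hc : 1 ≤ c) :
    Summable fun m : ℕ => 1 / Real.Gamma (β * m + c) := by
  have hr0 : (0:ℝ) ≤ (2:ℝ) ^ (-β) := (Real.rpow_pos_of_pos (by norm_num) _).le
  have hr1 : (2:ℝ) ^ (-β) < 1 :=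
    Real.rpow_lt_one_of_one_lt_of_neg (by norm_num) (by linarith)
  apply summable_of_isBigO_nat (summable_geometric_of_lt_one hr0 hr1)
  rw [Asymptotics.isBigO_iff]
  refine ⟨(2:ℝ) ^ (4 - c), ?_⟩
  obtain ⟨N, hN⟩ := exists_nat_ge (3 / β)
  filter_upwards [Filter.eventually_ge_atTop N] with m hm
  have hmN : (3:ℝ) ≤ β * m := by
    have : (3:ℝ)/β ≤ (m:ℝ) := le_trans hN (by exact_mod_cast hm)
    calc (3:ℝ) = (3/β) * β := by field_simp
    _ ≤ m * β := by gcongr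
    _ = β * m := mul_comm _ _
  have hx3 : 3 ≤ β * m + c := by linarith
  have hΓpos : 0 < Real.Gamma (β * m + c) := Real.Gamma_pos_of_pos (by linarith)
  have hlow := gamma_lower hx3
  have hpow_pos : (0:ℝ) < (2:ℝ) ^ (β * m + c - 4) := Real.rpow_pos_of_pos (by norm_num) _
  rw [Real.norm_eq_abs, Real.norm_eq_abs, abs_of_pos (by positivity),
    abs_of_pos (pow_pos (Real.rpow_pos_of_pos (by norm_num) _) m)]
  have key : (1:ℝ) / Real.Gamma (β * m + c) ≤ 1 / (2:ℝ) ^ (β * m + c - 4) := by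
    gcongr
  calc (1:ℝ) / Real.Gamma (β * m + c) ≤ 1 / (2:ℝ) ^ (β * m + c - 4) := key
    _ = (2:ℝ) ^ (-(β * m + c - 4)) := by
        rw [Real.rpow_neg (by norm_num), one_div]
    _ = (2:ℝ) ^ (4 - c) * ((2:ℝ) ^ (-β)) ^ m := by
        rw [← Real.rpow_natCast ((2:ℝ) ^ (-β)) m, ← Real.rpow_mul (by norm_num),
          ← Real.rpow_add (by norm_num)]
        ring_nf

lemma ml_eq {β : ℝ} (hβ : 0 < β) {z : ℝ} (hz : |z| ≤ 1) :
    mittagLeffler β z = 1 + z * mlAux β z := by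
  have hsum : Summable (fun m : ℕ => z ^ m / Real.Gamma (β * m + 1)) := by
    apply Summable.of_norm_bounded (summable_inv_gamma hβ le_rfl)
    intro m
    have hΓ : 0 < Real.Gamma (β * m + 1) := Real.Gamma_pos_of_pos (by positivity)
    rw [norm_div, Real.norm_eq_abs, Real.norm_eq_abs, abs_of_pos hΓ, abs_pow]
    have : |z| ^ m ≤ 1 := pow_le_one₀ (abs_nonneg z) hz
    gcongr
  rw [mittagLeffler, Summable.tsum_eq_zero_add hsum]
  have h0 : z ^ 0 / Real.Gamma (β * (0:ℕ) + 1) = 1 := by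
    norm_num [Real.Gamma_one]
  rw [h0]
  congr 1
  have hcongr : ∀ m : ℕ, z ^ (m+1) / Real.Gamma (β * ((m:ℕ)+1 : ℕ) + 1)
      = z * (z ^ m / Real.Gamma (β * ((m:ℝ) + 1) + 1)) := by
    intro m; push_cast; rw [pow_succ]; ring
  rw [tsum_congr hcongr, tsum_mul_left]
  rfl

lemma mlAux_zero (β : ℝ) : mlAux β 0 = 1 / Real.Gamma (β + 1) := by
  rw [mlAux, tsum_eq_single 0]
  · norm_num
  · intro m hm; simp [zero_pow hm]

lemma mlAux_continuousAt {β : ℝ} (hβ : 0 < β) : ContinuousAt (mlAux β) 0 := by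
  have hcont : ContinuousOn (mlAux β) (Metric.ball (0:ℝ) 1) := by
    have hu : Summable fun m : ℕ => 1 / Real.Gamma (β * m + (β + 1)) :=
      summable_inv_gamma hβ (by linarith)
    apply (tendstoUniformlyOn_tsum hu ?_).continuousOn
      (Filter.Eventually.of_forall fun t => ?_).frequently
    · intro n x hx
      have hΓ : 0 < Real.Gamma (β * n + (β + 1)) := Real.Gamma_pos_of_pos (by positivity)
      have hxx : |x| ≤ 1 := by
        rw [Metric.mem_ball, Real.dist_eq, sub_zero] at hx; exact hx.le
      have harg : β * ((n:ℝ) + 1) + 1 = β * n + (β + 1) := by ring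
      rw [harg, norm_div, Real.norm_eq_abs, Real.norm_eq_abs, abs_of_pos hΓ, abs_pow]
      have : |x| ^ n ≤ 1 := pow_le_one₀ (abs_nonneg x) hxx
      gcongr
    · exact (continuous_finset_sum _ fun i _ =>
        (continuous_pow i).div_const _).continuousOn
  exact hcont.continuousAt (Metric.ball_mem_nhds 0 one_pos)

lemma sum_range_add_one (k : ℕ) :
    ∑ j ∈ Finset.range k, ((j:ℝ) + 1) = k * (k + 1) / 2 := by
  induction k with
  | zero => simp
  | succ n ih => rw [Finset.sum_range_succ, ih]; push_cast; ring

/-- The mean of the time-fractional Poisson process of order `k`: the derivative at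
`u = 1` of its probability generating function
`u ↦ M_β(−kλt^β(1 − (1/k)∑_{j=1}^k u^j))` equals `(k(k+1)/2) λ t^β / Γ(1+β)`. -/
theorem mean_time_fractional_poisson_of_order_k
    (k : ℕ) (hk : 1 ≤ k) (lam β t : ℝ) (hlam : 0 < lam) (hβ : β ∈ Set.Ioc (0 : ℝ) 1)
    (ht : 0 ≤ t) :
    deriv (fun u : ℝ =>
        mittagLeffler β
          (-(k * lam * t ^ β * (1 - (1 / k) * ∑ j ∈ Finset.range k, u ^ (j + 1))))) 1 =
      (k * (k + 1) / 2) * lam * t ^ β / Real.Gamma (1 + β) := by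
  obtain ⟨hβ0, hβ1⟩ := hβ
  have hK : (0:ℝ) < (k:ℝ) := by exact_mod_cast hk
  set C : ℝ := (k:ℝ) * lam * t ^ β with hC
  set g : ℝ → ℝ := fun u =>
    -((k:ℝ) * lam * t ^ β * (1 - (1 / (k:ℝ)) * ∑ j ∈ Finset.range k, u ^ (j + 1))) with hgdef
  have hg1 : g 1 = 0 := by
    simp only [hgdef]
    rw [show ∑ j ∈ Finset.range k, (1:ℝ) ^ (j + 1) = k by simp]
    field_simp
    simp
  set d : ℝ := C * ((1 / (k:ℝ)) * ∑ j ∈ Finset.range k, ((j:ℝ) + 1)) with hd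
  have hgd : HasDerivAt g d 1 := by
    have hs : HasDerivAt (fun u : ℝ => ∑ j ∈ Finset.range k, u ^ (j + 1))
        (∑ j ∈ Finset.range k, ((j:ℝ) + 1)) 1 := by
      apply HasDerivAt.fun_sum
      intro j _
      simpa using hasDerivAt_pow (j + 1) (1:ℝ)
    have h1 := hs.const_mul (1 / (k:ℝ))
    have h2 := (h1.const_sub 1).const_mul C
    have h3 : HasDerivAt (fun u : ℝ => -(C * (1 - 1 / (k:ℝ) * ∑ j ∈ Finset.range k, u ^ (j + 1))))
        (-(C * -(1 / (k:ℝ) * ∑ j ∈ Finset.range k, ((j:ℝ) + 1)))) 1 := h2.neg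
    convert h3 using 1
    ring
  set E0 : ℝ := mlAux β 0 with hE0
  have hgcont : Filter.Tendsto g (nhds 1) (nhds 0) := by
    rw [← hg1]; exact hgd.continuousAt
  have hsmall : ∀ᶠ u in nhds (1:ℝ), |g u| < 1 := by
    have h01 : ∀ᶠ z in nhds (0:ℝ), |z| < 1 := by
      have := Metric.ball_mem_nhds (0:ℝ) one_pos
      filter_upwards [this] with z hz
      rwa [Metric.mem_ball, Real.dist_eq, sub_zero] at hz
    exact hgcont.eventually h01
  have hF : HasDerivAt (fun u : ℝ =>
      mittagLeffler β
        (-((k:ℝ) * lam * t ^ β * (1 - (1 / (k:ℝ)) * ∑ j ∈ Finset.range k, u ^ (j + 1)))))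
      (d * E0) 1 := by
    rw [hasDerivAt_iff_tendsto_slope]
    have h1 : Filter.Tendsto (slope g 1) (nhdsWithin 1 {(1:ℝ)}ᶜ) (nhds d) :=
      hasDerivAt_iff_tendsto_slope.mp hgd
    have h2 : Filter.Tendsto (fun u => mlAux β (g u)) (nhdsWithin 1 {(1:ℝ)}ᶜ) (nhds E0) :=
      (mlAux_continuousAt hβ0).tendsto.comp (hgcont.mono_left nhdsWithin_le_nhds)
    apply (h1.mul h2).congr'
    filter_upwards [nhdsWithin_le_nhds hsmall] with u hu
    have hzu : mittagLeffler β (g u) = 1 + g u * mlAux β (g u) := ml_eq hβ0 hu.le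
    have hz1 : mittagLeffler β (g 1) = 1 := by
      rw [hg1, ml_eq hβ0 (by norm_num : |(0:ℝ)| ≤ 1)]; ring
    show slope g 1 u * mlAux β (g u) = slope (fun u => mittagLeffler β (g u)) 1 u
    rw [slope_def_field, slope_def_field, hzu, hz1, hg1]
    ring
  rw [hF.deriv, hE0, mlAux_zero, hd, hC, sum_range_add_one, add_comm 1 β]
  have hΓ : Real.Gamma (β + 1) ≠ 0 := (Real.Gamma_pos_of_pos (by linarith)).ne'
  field_simp
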